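/- arXiv:1703.10001 — 2 statements merged into one kernel-verified Lean document; each statement's English description precedes it below -/
import Mathlib

section
/- Let χ(m) = Ψ(∫φ₁ dm, …, ∫φ_N dm) where each φᵢ is K_φ-Lipschitz and Ψ : ℝᴺ → ℝ has a K_{DΨ}-Lipschitz derivative. Then with Dχ(m, x) = ∑ᵢ ∂_{yᵢ}Ψ(∫φ₁dm,…,∫φ_N dm) φᵢ(x), for all probability measures m₁, m₂, m₃, m₄ with finite first moments: |(Dχ(m₂) − Dχ(m₁))(m₄ − m₃)| ≤ K_{DΨ} K_φ² d₁(m₁,m₂) d₁(m₃,m₄). -/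
open MeasureTheory NNReal

/-- The 1-Wasserstein distance, defined as the infimum of transportation costs
over couplings. -/
noncomputable def W1 {E : Type*} [MeasurableSpace E] [PseudoMetricSpace E]
    (m₁ m₂ : MeasureTheory.Measure E) : ℝ :=
  sInf {r : ℝ | ∃ π : MeasureTheory.Measure (E × E),
    π.map Prod.fst = m₁ ∧ π.map Prod.snd = m₂ ∧ r = ∫ p, dist p.1 p.2 ∂π}

section Aux

variable {n : ℕ}

local notation "E" => EuclideanSpace ℝ (Fin n)

lemma lip_integrable {K : ℝ≥0} {f : E → ℝ} (hf : LipschitzWith K f)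
    (m : Measure E) [IsProbabilityMeasure m] (hm : Integrable (fun x => ‖x‖) m) :
    Integrable f m := by
  refine Integrable.mono' ((integrable_const (|f 0|)).add (hm.const_mul (K : ℝ)))
    hf.continuous.aestronglyMeasurable ?_
  filter_upwards with x
  have := hf.dist_le_mul x 0
  simp only [Real.dist_eq] at this
  have h0 : dist x (0 : E) = ‖x‖ := by simp
  calc ‖f x‖ = |f x - f 0 + f 0| := by simp [sub_add_cancel]
    _ ≤ |f x - f 0| + |f 0| := abs_add_le _ _
    _ ≤ (K : ℝ) * ‖x‖ + |f 0| := by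
        rw [← h0]; exact add_le_add (hf.dist_le_mul x 0) le_rfl
    _ = |f 0| + (K : ℝ) * ‖x‖ := by ring

lemma W1_nonneg (m m' : Measure E) : 0 ≤ W1 m m' := by
  apply Real.sInf_nonneg
  rintro r ⟨π, -, -, rfl⟩
  exact integral_nonneg fun p => dist_nonneg

lemma abs_integral_sub_le_W1 {K : ℝ≥0} {f : E → ℝ} (hf : LipschitzWith K f)
    (m m' : Measure E) [IsProbabilityMeasure m] [IsProbabilityMeasure m']
    (hm : Integrable (fun x => ‖x‖) m) (hm' : Integrable (fun x => ‖x‖) m') :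
    |(∫ x, f x ∂m') - ∫ x, f x ∂m| ≤ (K : ℝ) * W1 m m' := by
  set S : Set ℝ := {r : ℝ | ∃ π : Measure (E × E),
    π.map Prod.fst = m ∧ π.map Prod.snd = m' ∧ r = ∫ p, dist p.1 p.2 ∂π}
  have hSne : S.Nonempty := by
    refine ⟨∫ p, dist p.1 p.2 ∂(m.prod m'), m.prod m', ?_, ?_, rfl⟩
    · simp
    · simp
  have hbound : ∀ r ∈ S, |(∫ x, f x ∂m') - ∫ x, f x ∂m| ≤ (K : ℝ) * r := by
    rintro r ⟨π, hπ1, hπ2, rfl⟩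
    have hπprob : IsProbabilityMeasure π := by
      constructor
      have : π.map Prod.fst Set.univ = π Set.univ := by
        rw [Measure.map_apply measurable_fst MeasurableSet.univ]; rfl
      rw [← this, hπ1]; exact measure_univ
    have hn1 : Integrable (fun p : E × E => ‖p.1‖) π := by
      have := (integrable_map_measure (f := Prod.fst)
        (g := fun x : E => ‖x‖) (continuous_norm.aestronglyMeasurable)
        measurable_fst.aemeasurable).1 (by rwa [hπ1])
      exact this
    have hn2 : Integrable (fun p : E × E => ‖p.2‖) π := by
      have := (integrable_map_measure (f := Prod.snd)
        (g := fun x : E => ‖x‖) (continuous_norm.aestronglyMeasurable)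
        measurable_snd.aemeasurable).1 (by rwa [hπ2])
      exact this
    have hdist : Integrable (fun p : E × E => dist p.1 p.2) π := by
      refine Integrable.mono' (hn1.add hn2)
        (continuous_dist.comp (continuous_fst.prodMk continuous_snd)).aestronglyMeasurable ?_
      filter_upwards with p
      rw [Real.norm_eq_abs, abs_of_nonneg dist_nonneg]
      exact (dist_le_norm_add_norm _ _)
    have hf1 : Integrable (fun p : E × E => f p.1) π := by
      have := (integrable_map_measure (f := Prod.fst) (g := f)
        hf.continuous.aestronglyMeasurable measurable_fst.aemeasurable).1
        (by rw [hπ1]; exact lip_integrable hf m hm)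
      exact this
    have hf2 : Integrable (fun p : E × E => f p.2) π := by
      have := (integrable_map_measure (f := Prod.snd) (g := f)
        hf.continuous.aestronglyMeasurable measurable_snd.aemeasurable).1
        (by rw [hπ2]; exact lip_integrable hf m' hm')
      exact this
    have e1 : ∫ x, f x ∂m = ∫ p, f p.1 ∂π := by
      rw [← hπ1, integral_map measurable_fst.aemeasurable hf.continuous.aestronglyMeasurable]
    have e2 : ∫ x, f x ∂m' = ∫ p, f p.2 ∂π := by
      rw [← hπ2, integral_map measurable_snd.aemeasurable hf.continuous.aestronglyMeasurable]
    rw [e1, e2, ← integral_sub hf2 hf1]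
    calc |∫ p, (f p.2 - f p.1) ∂π| ≤ ∫ p, |f p.2 - f p.1| ∂π :=
          (Real.norm_eq_abs _ ▸ norm_integral_le_integral_norm _).trans_eq (by simp [Real.norm_eq_abs])
      _ ≤ ∫ p, (K : ℝ) * dist p.1 p.2 ∂π := by
          refine integral_mono_of_nonneg (Filter.Eventually.of_forall fun p => abs_nonneg _)
            (hdist.const_mul _) ?_
          filter_upwards with p
          have := hf.dist_le_mul p.2 p.1
          rw [Real.dist_eq] at this
          rw [dist_comm p.1 p.2]
          exact this
      _ = (K : ℝ) * ∫ p, dist p.1 p.2 ∂π := integral_const_mul _ _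
  rcases eq_or_lt_of_le (show (0:ℝ≥0) ≤ K from zero_le) with hK | hK
  · have hconst : ∀ x, f x = f 0 := by
      intro x
      have := hf.dist_le_mul x 0
      rw [← hK] at this
      simp only [NNReal.coe_zero, zero_mul] at this
      have : dist (f x) (f 0) = 0 := le_antisymm this dist_nonneg
      rwa [dist_eq_zero] at this
    have : (∫ x, f x ∂m') = ∫ x, f x ∂m := by
      rw [show f = fun _ => f 0 from funext hconst]
      simp
    rw [this, sub_self, abs_zero, ← hK]
    simp [W1_nonneg m m']
  · have hKpos : (0:ℝ) < K := hK
    rw [mul_comm, ← div_le_iff₀ hKpos]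
    apply le_csInf hSne
    intro r hr
    rw [div_le_iff₀ hKpos, mul_comm]
    exact hbound r hr

end Aux

/-- For `χ(m) = Ψ(∫φ₁ dm, …, ∫φ_N dm)` with each `φᵢ` being `K_φ`-Lipschitz and
`Ψ` having a `K_{DΨ}`-Lipschitz derivative, the derivative
`Dχ(m, x) = DΨ(∫φ dm)(φ(x))` satisfies
`|(Dχ(m₂) - Dχ(m₁))(m₄ - m₃)| ≤ K_{DΨ} K_φ² d₁(m₁,m₂) d₁(m₃,m₄)`. -/
theorem composite_cost_derivative_lipschitz
    (n N : ℕ) (φ : Fin N → EuclideanSpace ℝ (Fin n) → ℝ)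
    (Ψ : (Fin N → ℝ) → ℝ) (Kφ KΨ : ℝ≥0)
    (hφ : ∀ i, LipschitzWith Kφ (φ i))
    (hΨ : Differentiable ℝ Ψ)
    (hDΨ : LipschitzWith KΨ (fderiv ℝ Ψ))
    (m₁ m₂ m₃ m₄ : Measure (EuclideanSpace ℝ (Fin n)))
    [IsProbabilityMeasure m₁] [IsProbabilityMeasure m₂]
    [IsProbabilityMeasure m₃] [IsProbabilityMeasure m₄]
    (h₁ : Integrable (fun x => ‖x‖) m₁) (h₂ : Integrable (fun x => ‖x‖) m₂)
    (h₃ : Integrable (fun x => ‖x‖) m₃) (h₄ : Integrable (fun x => ‖x‖) m₄)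
    (Dχ : Measure (EuclideanSpace ℝ (Fin n)) → EuclideanSpace ℝ (Fin n) → ℝ)
    (hDχ : ∀ m x, Dχ m x = fderiv ℝ Ψ (fun i => ∫ y, φ i y ∂m) (fun i => φ i x)) :
    |((∫ x, Dχ m₂ x ∂m₄) - ∫ x, Dχ m₂ x ∂m₃)
        - ((∫ x, Dχ m₁ x ∂m₄) - ∫ x, Dχ m₁ x ∂m₃)|
      ≤ (KΨ : ℝ) * (Kφ : ℝ) ^ 2 * W1 m₁ m₂ * W1 m₃ m₄ := by
  let E := EuclideanSpace ℝ (Fin n)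
  set a₁ : Fin N → ℝ := fun i => ∫ y, φ i y ∂m₁ with ha₁
  set a₂ : Fin N → ℝ := fun i => ∫ y, φ i y ∂m₂ with ha₂
  set L : (Fin N → ℝ) →L[ℝ] ℝ := fderiv ℝ Ψ a₂ - fderiv ℝ Ψ a₁ with hL
  -- the map x ↦ (φ i x)_i is Kφ-Lipschitz
  have hΦlip : LipschitzWith Kφ (fun x : E => (fun i => φ i x)) := by
    apply LipschitzWith.of_dist_le_mul
    intro x y
    rcases isEmpty_or_nonempty (Fin N) with h | h
    · simp [dist_pi_le_iff (mul_nonneg (Kφ.coe_nonneg) dist_nonneg)]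
    · rw [dist_pi_le_iff (mul_nonneg (Kφ.coe_nonneg) dist_nonneg)]
      exact fun i => (hφ i).dist_le_mul x y
  -- g is the difference of the two derivatives
  set g : E → ℝ := fun x => L (fun i => φ i x) with hg
  have hglip : LipschitzWith (‖L‖₊ * Kφ) g :=
    L.lipschitz.comp hΦlip
  -- ‖a₂ - a₁‖ ≤ Kφ * W1 m₁ m₂
  have hW12 : (0:ℝ) ≤ W1 m₁ m₂ := W1_nonneg m₁ m₂
  have hW34 : (0:ℝ) ≤ W1 m₃ m₄ := W1_nonneg m₃ m₄
  have ha : ‖a₂ - a₁‖ ≤ (Kφ : ℝ) * W1 m₁ m₂ := by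
    rw [← dist_eq_norm, dist_pi_le_iff (mul_nonneg Kφ.coe_nonneg hW12)]
    intro i
    rw [Real.dist_eq]
    exact abs_integral_sub_le_W1 (hφ i) m₁ m₂ h₁ h₂
  have hLnorm : ‖L‖ ≤ (KΨ : ℝ) * ((Kφ : ℝ) * W1 m₁ m₂) := by
    have := hDΨ.dist_le_mul a₂ a₁
    rw [dist_eq_norm, dist_eq_norm] at this
    calc ‖L‖ ≤ (KΨ : ℝ) * ‖a₂ - a₁‖ := this
      _ ≤ (KΨ : ℝ) * ((Kφ : ℝ) * W1 m₁ m₂) :=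
          mul_le_mul_of_nonneg_left ha KΨ.coe_nonneg
  -- integrability
  have hint : ∀ (m : Measure E) [IsProbabilityMeasure m],
      Integrable (fun x => ‖x‖) m → ∀ (m' : Measure E),
      Integrable (fun x => Dχ m' x) m := by
    intro m _ hm m'
    have : (fun x => Dχ m' x) =
        fun x => (fderiv ℝ Ψ (fun i => ∫ y, φ i y ∂m')) (fun i => φ i x) := by
      funext x; exact hDχ m' x
    rw [this]
    exact lip_integrable ((fderiv ℝ Ψ _).lipschitz.comp hΦlip) m hm
  have hgm₃ : Integrable g m₃ := lip_integrable hglip m₃ h₃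
  have hgm₄ : Integrable g m₄ := lip_integrable hglip m₄ h₄
  -- rewrite LHS
  have hgx : ∀ x, g x = Dχ m₂ x - Dχ m₁ x := by
    intro x
    rw [hDχ, hDχ, hg, hL]
    simp [ha₁, ha₂]
  have hLHS : ((∫ x, Dχ m₂ x ∂m₄) - ∫ x, Dχ m₂ x ∂m₃)
      - ((∫ x, Dχ m₁ x ∂m₄) - ∫ x, Dχ m₁ x ∂m₃)
      = (∫ x, g x ∂m₄) - ∫ x, g x ∂m₃ := by
    have e4 : ∫ x, g x ∂m₄ = (∫ x, Dχ m₂ x ∂m₄) - ∫ x, Dχ m₁ x ∂m₄ := by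
      rw [← integral_sub (hint m₄ h₄ m₂) (hint m₄ h₄ m₁)]
      exact integral_congr_ae (Filter.Eventually.of_forall hgx)
    have e3 : ∫ x, g x ∂m₃ = (∫ x, Dχ m₂ x ∂m₃) - ∫ x, Dχ m₁ x ∂m₃ := by
      rw [← integral_sub (hint m₃ h₃ m₂) (hint m₃ h₃ m₁)]
      exact integral_congr_ae (Filter.Eventually.of_forall hgx)
    rw [e3, e4]; ring
  rw [hLHS]
  calc |(∫ x, g x ∂m₄) - ∫ x, g x ∂m₃| ≤ ((‖L‖₊ * Kφ : ℝ≥0) : ℝ) * W1 m₃ m₄ :=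
        abs_integral_sub_le_W1 hglip m₃ m₄ h₃ h₄
    _ = ‖L‖ * (Kφ : ℝ) * W1 m₃ m₄ := by push_cast [coe_nnnorm]; ring
    _ ≤ ((KΨ : ℝ) * ((Kφ : ℝ) * W1 m₁ m₂)) * (Kφ : ℝ) * W1 m₃ m₄ := by
        apply mul_le_mul_of_nonneg_right _ hW34
        exact mul_le_mul_of_nonneg_right hLnorm Kφ.coe_nonneg
    _ = (KΨ : ℝ) * (Kφ : ℝ) ^ 2 * W1 m₁ m₂ * W1 m₃ m₄ := by ring
end

section
/- (CVaR dual reduction) For a probability measure m on ℝ with finite first moment and β ∈ (0,1), inf_{(ψ₀,ψ₁)∈ℝ²} { ∫ max(x−ψ₁, −ψ₀) dm(x) + βψ₀ + (1−β)ψ₁ } = inf_{ψ∈ℝ} { ∫ (x−ψ)₊ dm(x) + (1−β)ψ }. -/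
open MeasureTheory

/-- CVaR dual reduction: for a probability measure `m` on `ℝ` with finite first
moment and `β ∈ (0,1)`, the two-variable dual problem reduces to the
one-variable Rockafellar–Uryasev formula. -/
theorem cvar_dual_reduction
    (m : Measure ℝ) [IsProbabilityMeasure m]
    (h : Integrable (fun x : ℝ => |x|) m)
    (β : ℝ) (hβ : β ∈ Set.Ioo (0 : ℝ) 1) :
    (⨅ p : ℝ × ℝ, (∫ x, max (x - p.2) (-p.1) ∂m) + β * p.1 + (1 - β) * p.2)
      = ⨅ ψ : ℝ, (∫ x, max (x - ψ) 0 ∂m) + (1 - β) * ψ := by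
  have hid : Integrable (fun x : ℝ => x) m := by
    show Integrable id m
    rw [← integrable_norm_iff (measurable_id.aestronglyMeasurable (μ := m))]
    simpa [Real.norm_eq_abs] using h
  have hmax : ∀ ψ : ℝ, Integrable (fun x : ℝ => max (x - ψ) 0) m := fun ψ =>
    (hid.sub (integrable_const ψ)).sup (integrable_const 0)
  set f : ℝ × ℝ → ℝ :=
    fun p => (∫ x, max (x - p.2) (-p.1) ∂m) + β * p.1 + (1 - β) * p.2 with hfdef
  set g : ℝ → ℝ := fun ψ => (∫ x, max (x - ψ) 0 ∂m) + (1 - β) * ψ with hgdef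
  have hf : ∀ p : ℝ × ℝ, f p = g (p.2 - p.1) := by
    intro p
    have hpt : (fun x : ℝ => max (x - p.2) (-p.1))
        = fun x => max (x - (p.2 - p.1)) 0 - p.1 := by
      funext x
      rcases le_total (x - p.2) (-p.1) with h1 | h1
      · rw [max_eq_right h1, max_eq_right (by linarith)]; ring
      · rw [max_eq_left h1, max_eq_left (by linarith)]; ring
    have hint : (∫ x, max (x - p.2) (-p.1) ∂m)
        = (∫ x, max (x - (p.2 - p.1)) 0 ∂m) - p.1 := by
      rw [hpt, integral_sub (hmax _) (integrable_const _), integral_const]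
      simp
    simp only [hfdef, hgdef, hint]
    ring
  have hrange : Set.range f = Set.range g := by
    apply Set.Subset.antisymm
    · rintro _ ⟨p, rfl⟩
      exact ⟨p.2 - p.1, (hf p).symm⟩
    · rintro _ ⟨ψ, rfl⟩
      refine ⟨(0, ψ), ?_⟩
      rw [hf (0, ψ)]
      simp
  show sInf (Set.range f) = sInf (Set.range g)
  rw [hrange]
end
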